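/- Let φ be a fixedpoint-free continuous flow on ℝ² whose orbit foliation is trivial. Then there is a homeomorphism h : ℝ² → ℝ² which is equivariant with respect to φ and the translation flow Φ^t(x,y) = (x+t, y): for all p ∈ ℝ² and all t ∈ ℝ, h(φ^t(p)) = h(p) + (t, 0). -/

import Mathlib

open Filter Topology Function Set

/-- A (continuous) flow on the plane ℝ². -/
def IsFlow (φ : ℝ → ℝ × ℝ → ℝ × ℝ) : Prop :=
  Continuous (uncurry φ) ∧ (∀ p, φ 0 p = p) ∧ ∀ s t p, φ s (φ t p) = φ (s + t) p

/-- The flow has no fixedpoint. -/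
def FixedpointFree (φ : ℝ → ℝ × ℝ → ℝ × ℝ) : Prop :=
  ∀ p : ℝ × ℝ, ∃ t : ℝ, φ t p ≠ p

/-- The orbit of a point under a flow. -/
def flowOrbit (φ : ℝ → ℝ × ℝ → ℝ × ℝ) (p : ℝ × ℝ) : Set (ℝ × ℝ) :=
  Set.range (fun t => φ t p)

/-- A C¹ flow: continuously differentiable with nowhere-vanishing velocity field. -/
def IsC1Flow (φ : ℝ → ℝ × ℝ → ℝ × ℝ) : Prop :=
  IsFlow φ ∧ ContDiff ℝ 1 (uncurry φ) ∧ ∀ p : ℝ × ℝ, deriv (fun t => φ t p) 0 ≠ 0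

/-- The orbit foliation of φ is trivial: some self-homeomorphism of the plane
takes every orbit to a horizontal line. -/
def TrivialFoliation (φ : ℝ → ℝ × ℝ → ℝ × ℝ) : Prop :=
  ∃ H : (ℝ × ℝ) ≃ₜ (ℝ × ℝ), ∀ p : ℝ × ℝ, ∃ c : ℝ,
    H '' flowOrbit φ p = {q : ℝ × ℝ | q.2 = c}

/-- a fixedpoint-free flow on ℝ² with trivial orbit foliation is
topologically equivariant with the translation flow `Φ^t(x,y) = (x+t,y)`. -/
private lemma tau_cont (g τ : ℝ → ℝ → ℝ)
    (hg : Continuous fun q : ℝ × ℝ => g q.1 q.2)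
    (hmono : ∀ c, StrictMono fun t => g t c)
    (hτ : ∀ c x, g (τ c x) c = x) :
    Continuous fun q : ℝ × ℝ => τ q.2 q.1 := by
  rw [continuous_iff_continuousAt]
  rintro ⟨x₀, c₀⟩
  rw [ContinuousAt, Metric.tendsto_nhds]
  intro ε hε
  have hU : IsOpen {q : ℝ × ℝ | g (τ c₀ x₀ - ε/2) q.2 < q.1 ∧ q.1 < g (τ c₀ x₀ + ε/2) q.2} := by
    apply IsOpen.inter
    · exact isOpen_lt (hg.comp ((continuous_const).prodMk continuous_snd)) continuous_fst
    · exact isOpen_lt continuous_fst (hg.comp ((continuous_const).prodMk continuous_snd))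
  have hmem : (x₀, c₀) ∈ {q : ℝ × ℝ | g (τ c₀ x₀ - ε/2) q.2 < q.1 ∧ q.1 < g (τ c₀ x₀ + ε/2) q.2} := by
    constructor
    · have := (hmono c₀) (show τ c₀ x₀ - ε/2 < τ c₀ x₀ by linarith)
      simpa only [hτ c₀ x₀] using this
    · have := (hmono c₀) (show τ c₀ x₀ < τ c₀ x₀ + ε/2 by linarith)
      simpa only [hτ c₀ x₀] using this
  filter_upwards [hU.mem_nhds hmem] with q hq
  obtain ⟨h1, h2⟩ := hq
  rw [← hτ q.2 q.1] at h1 h2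
  have l1 : τ c₀ x₀ - ε/2 < τ q.2 q.1 := (hmono q.2).lt_iff_lt.mp h1
  have l2 : τ q.2 q.1 < τ c₀ x₀ + ε/2 := (hmono q.2).lt_iff_lt.mp h2
  rw [Real.dist_eq, abs_sub_lt_iff]
  constructor <;> linarith

theorem trivial_foliation_flow_conjugate_to_translation_flow
    (φ : ℝ → ℝ × ℝ → ℝ × ℝ) (hφ : IsFlow φ) (hfree : FixedpointFree φ)
    (htriv : TrivialFoliation φ) :
    ∃ h : (ℝ × ℝ) ≃ₜ (ℝ × ℝ), ∀ (p : ℝ × ℝ) (t : ℝ),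
      h (φ t p) = h p + (t, 0) := by
  obtain ⟨hcont, hzero, hcomp⟩ := hφ
  obtain ⟨H, hH⟩ := htriv
  -- the conjugated flow preserves horizontal lines, and each orbit is a full line
  have horb : ∀ q : ℝ × ℝ, H '' flowOrbit φ (H.symm q) = {r : ℝ × ℝ | r.2 = q.2} := by
    intro q
    obtain ⟨c, hc⟩ := hH (H.symm q)
    have hqmem : q ∈ H '' flowOrbit φ (H.symm q) :=
      ⟨H.symm q, ⟨0, hzero _⟩, H.apply_symm_apply q⟩
    rw [hc] at hqmem ⊢
    rw [show c = q.2 from hqmem.symm]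
  have hsnd : ∀ (t : ℝ) (q : ℝ × ℝ), (H (φ t (H.symm q))).2 = q.2 := by
    intro t q
    have : H (φ t (H.symm q)) ∈ H '' flowOrbit φ (H.symm q) :=
      ⟨φ t (H.symm q), ⟨t, rfl⟩, rfl⟩
    rw [horb q] at this
    exact this
  -- g t c : first coordinate of the conjugated orbit of (0,c)
  set g : ℝ → ℝ → ℝ := fun t c => (H (φ t (H.symm (0, c)))).1 with hg
  have hψg : ∀ t c, H (φ t (H.symm (0, c))) = (g t c, c) := by
    intro t c
    exact Prod.ext rfl (hsnd t (0, c))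
  have hgcont : Continuous fun q : ℝ × ℝ => g q.1 q.2 := by
    apply continuous_fst.comp
    apply H.continuous.comp
    exact hcont.comp (continuous_fst.prodMk
      (H.symm.continuous.comp (continuous_const.prodMk continuous_snd)))
  have hg0 : ∀ c, g 0 c = 0 := by
    intro c
    have : H (φ 0 (H.symm (0, c))) = ((0 : ℝ), c) := by
      rw [hzero]; exact H.apply_symm_apply _
    rw [hg]; simp only []; rw [this]
  -- injectivity of g · c : no periodic orbits since orbits are full lines
  have ginj : ∀ c, Injective fun t => g t c := by
    intro c a b hab
    have hab' : g a c = g b c := hab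
    by_contra hne
    have hpt : φ a (H.symm (0, c)) = φ b (H.symm (0, c)) := by
      apply H.injective
      rw [hψg a c, hψg b c, hab']
    set q' : ℝ × ℝ := φ b (H.symm (0, c)) with hq'
    have hper0 : φ (a - b) q' = q' := by
      rw [hq', hcomp, sub_add_cancel, hpt]
    have hper : Function.Periodic (fun r => φ r q') (a - b) := by
      intro r
      simp only []
      rw [← hcomp r (a - b) q', hper0]
    have hTne : a - b ≠ 0 := sub_ne_zero.mpr hne
    have fcont : Continuous fun r => φ r q' :=
      hcont.comp (continuous_id.prodMk continuous_const)
    have hcpt : IsCompact (Set.range fun r => φ r q') := by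
      rcases hTne.lt_or_gt with hT | hT
      · have := (hper.neg).image_Icc (by linarith : (0:ℝ) < -(a-b)) 0
        rw [← this]
        exact (isCompact_Icc).image fcont
      · have := hper.image_Icc hT 0
        rw [← this]
        exact (isCompact_Icc).image fcont
    have hcpt2 : IsCompact (H '' flowOrbit φ q') := hcpt.image H.continuous
    obtain ⟨c', hc'⟩ := hH q'
    rw [hc'] at hcpt2
    obtain ⟨R, hR⟩ := isBounded_iff_forall_norm_le.mp hcpt2.isBounded
    have hmem : ((|R| + 1, c') : ℝ × ℝ) ∈ {q : ℝ × ℝ | q.2 = c'} := rfl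
    have := hR _ hmem
    have h1 : ‖(|R| + 1 : ℝ)‖ ≤ ‖((|R| + 1, c') : ℝ × ℝ)‖ := by
      simpa using norm_fst_le ((|R| + 1, c') : ℝ × ℝ)
    rw [Real.norm_eq_abs, abs_of_nonneg (by positivity)] at h1
    have := le_trans h1 this
    have := le_abs_self R
    linarith
  -- surjectivity of g · c
  have gsurj : ∀ c x, ∃ t, g t c = x := by
    intro c x
    have : ((x, c) : ℝ × ℝ) ∈ {r : ℝ × ℝ | r.2 = (0, c).2} := rfl
    rw [← horb (0, c)] at this
    obtain ⟨p', ⟨t, ht⟩, hp'⟩ := this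
    refine ⟨t, ?_⟩
    have ht' : φ t (H.symm (0, c)) = p' := ht
    have : H (φ t (H.symm (0, c))) = (x, c) := by rw [ht']; exact hp'
    rw [hψg t c] at this
    exact (Prod.ext_iff.mp this).1
  -- dichotomy : all slices strictly monotone, or all strictly antitone
  have gccont : ∀ c, Continuous fun t => g t c := fun c =>
    hgcont.comp (continuous_id.prodMk continuous_const)
  have g1ne : ∀ c, g 1 c ≠ 0 := by
    intro c h
    have : (1 : ℝ) = 0 := ginj c (show g 1 c = g 0 c by rw [h, hg0 c])
    norm_num at this
  have hkey : ∀ a b : ℝ, g 1 a < 0 → 0 < g 1 b → False := by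
    intro a b ha hb
    have hcont1 : ContinuousOn (fun c => g 1 c) (uIcc a b) :=
      (hgcont.comp (continuous_const.prodMk continuous_id)).continuousOn
    have h0 : (0 : ℝ) ∈ uIcc (g 1 a) (g 1 b) := by
      rw [Set.mem_uIcc]; left; exact ⟨ha.le, hb.le⟩
    obtain ⟨c', _, hc'⟩ := intermediate_value_uIcc hcont1 h0
    exact g1ne c' hc'
  have hsgn : (∀ c, StrictMono fun t => g t c) ∨ (∀ c, StrictAnti fun t => g t c) := by
    rcases (g1ne 0).lt_or_gt with hneg | hpos
    · right
      intro c
      rcases (gccont c).strictMono_of_inj (ginj c) with hm | ha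
      · exfalso
        have : g 0 c < g 1 c := hm one_pos
        rw [hg0 c] at this
        rcases (g1ne c).lt_or_gt with h | h
        · linarith
        · exact hkey 0 c hneg h
      · exact ha
    · left
      intro c
      rcases (gccont c).strictMono_of_inj (ginj c) with hm | ha
      · exact hm
      · exfalso
        have : g 1 c < g 0 c := ha one_pos
        rw [hg0 c] at this
        exact hkey c 0 this hpos
  -- the inverse τ
  choose τ hτ using gsurj
  have hτinv : ∀ c u, τ c (g u c) = u := fun c u => ginj c (hτ c (g u c))
  have τcont : Continuous fun q : ℝ × ℝ => τ q.2 q.1 := by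
    rcases hsgn with hm | ha
    · exact tau_cont g τ hgcont hm hτ
    · have hm' : ∀ c, StrictMono fun t => g (-t) c :=
        fun c a b hab => ha c (neg_lt_neg hab)
      have hτ' : ∀ c x, g (-(-(τ c x))) c = x := by
        intro c x; rw [neg_neg]; exact hτ c x
      have := tau_cont (fun t c => g (-t) c) (fun c x => -(τ c x))
        (hgcont.comp (continuous_fst.neg.prodMk continuous_snd)) hm' hτ'
      have h2 := this.neg
      simpa only [Pi.neg_def, neg_neg] using h2
  -- the straightening homeomorphism
  let h₂ : (ℝ × ℝ) ≃ₜ (ℝ × ℝ) :=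
    { toFun := fun q => (τ q.2 q.1, q.2)
      invFun := fun q => (g q.1 q.2, q.2)
      left_inv := fun q => by simp only [hτ]
      right_inv := fun q => by simp only [hτinv]
      continuous_toFun := τcont.prodMk continuous_snd
      continuous_invFun := hgcont.prodMk continuous_snd }
  refine ⟨H.trans h₂, ?_⟩
  intro p t
  set c : ℝ := (H p).2 with hc
  set s : ℝ := τ c (H p).1 with hs
  have hHp : H p = (g s c, c) := by
    rw [hs, hc, hτ]
  have hkeyp : φ s (H.symm (0, c)) = p := by
    apply H.injective
    rw [hψg s c, hHp]
  have step2 : H (φ t p) = (g (t + s) c, c) := by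
    rw [← hkeyp, hcomp, hψg]
  simp only [Homeomorph.trans_apply]
  rw [step2, hHp]
  show ((τ c (g (t + s) c), c) : ℝ × ℝ) = (τ c (g s c), c) + (t, 0)
  rw [hτinv, hτinv, Prod.mk_add_mk, add_zero, add_comm]
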